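/- Let a, b, p₃ be complex numbers with a ≠ 0, and let u₀(ζ) = 2a² exp(aζ + b)/(exp(2(aζ + b)) − a² p₃). Then on any domain where exp(2(aζ + b)) ≠ a² p₃ and u₀(ζ) ≠ 0, u₀ satisfies the differential equation u₀'' = (u₀')²/u₀ + p₃ u₀³. -/

import Mathlib

/-- The general solution `u₀(ζ) = 2a² exp(aζ + b)/(exp(2(aζ + b)) − a²p₃)` of the leading-order
equation `u₀'' = (u₀')²/u₀ + p₃u₀³` arising in Painlevé's α-method for the inhomogeneous
Suslov problem. -/
theorem painleve_leading_order_solution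
    (a b p3 : ℂ) (ha : a ≠ 0)
    (u0 : ℂ → ℂ)
    (hu0 : u0 = fun ζ : ℂ =>
      2 * a ^ 2 * Complex.exp (a * ζ + b) / (Complex.exp (2 * (a * ζ + b)) - a ^ 2 * p3)) :
    ∀ ζ : ℂ, Complex.exp (2 * (a * ζ + b)) ≠ a ^ 2 * p3 → u0 ζ ≠ 0 →
      deriv (deriv u0) ζ = (deriv u0 ζ) ^ 2 / u0 ζ + p3 * (u0 ζ) ^ 3 := by
  intro ζ hg0 hu
  set E : ℂ → ℂ := fun z => Complex.exp (a * z + b) with hE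
  have hexp : ∀ z, Complex.exp (2 * (a * z + b)) = E z ^ 2 := by
    intro z; rw [two_mul, Complex.exp_add]; simp [hE, sq]
  have hEd : ∀ z, HasDerivAt E (a * E z) z := by
    intro z
    have h1 : HasDerivAt (fun z : ℂ => a * z + b) a z := by
      simpa using ((hasDerivAt_id z).const_mul a).add_const b
    simpa [hE, mul_comm] using h1.cexp
  have hEne : ∀ z, E z ≠ 0 := fun z => Complex.exp_ne_zero _
  set g : ℂ → ℂ := fun z => E z ^ 2 - a ^ 2 * p3 with hgdef
  have hgζ : g ζ ≠ 0 := by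
    simp only [hgdef, sub_ne_zero]
    rw [← hexp ζ]; exact hg0
  have hu0g : u0 = fun z => 2 * a ^ 2 * E z / g z := by
    rw [hu0]; funext z; rw [hexp z]
  have hgd : ∀ z, HasDerivAt g (2 * a * E z ^ 2) z := by
    intro z
    have := ((hEd z).pow 2).sub_const (a ^ 2 * p3)
    refine this.congr_deriv ?_
    ring
  set u1 : ℂ → ℂ := fun z => 2 * a ^ 3 * E z * (-(E z ^ 2) - a ^ 2 * p3) / (g z) ^ 2
    with hu1
  have hder : ∀ z, g z ≠ 0 → HasDerivAt u0 (u1 z) z := by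
    intro z hz
    have hf : HasDerivAt (fun z => 2 * a ^ 2 * E z) (2 * a ^ 2 * (a * E z)) z :=
      (hEd z).const_mul _
    have h2 := hf.div (hgd z) hz
    rw [hu0g]
    refine h2.congr_deriv ?_
    rw [hu1]
    field_simp
    ring
  have hgcont : Continuous g := by
    apply Continuous.sub _ continuous_const
    exact (Complex.continuous_exp.comp (by continuity)).pow 2
  have hopen : IsOpen {z : ℂ | g z ≠ 0} := by
    have : {z : ℂ | g z ≠ 0} = g ⁻¹' {(0 : ℂ)}ᶜ := rfl
    rw [this]
    exact isOpen_compl_singleton.preimage hgcont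
  have hmem : {z : ℂ | g z ≠ 0} ∈ nhds ζ := hopen.mem_nhds hgζ
  have heq : deriv u0 =ᶠ[nhds ζ] u1 :=
    Filter.eventuallyEq_of_mem hmem (fun z hz => (hder z hz).deriv)
  have h2eq : deriv (deriv u0) ζ = deriv u1 ζ := heq.deriv_eq
  -- derivative of u1 at ζ
  have hNd : HasDerivAt (fun z => 2 * a ^ 3 * E z * (-(E z ^ 2) - a ^ 2 * p3))
      (2 * a ^ 3 * (a * E ζ) * (-(E ζ ^ 2) - a ^ 2 * p3)
        + 2 * a ^ 3 * E ζ * (-(2 * a * E ζ ^ 2))) ζ := by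
    have h1 : HasDerivAt (fun z => 2 * a ^ 3 * E z) (2 * a ^ 3 * (a * E ζ)) ζ :=
      (hEd ζ).const_mul _
    have h2 : HasDerivAt (fun z => -(E z ^ 2) - a ^ 2 * p3) (-(2 * a * E ζ ^ 2)) ζ := by
      have := (((hEd ζ).pow 2).neg).sub_const (a ^ 2 * p3)
      refine this.congr_deriv ?_
      ring
    exact h1.mul h2
  have hDd : HasDerivAt (fun z => (g z) ^ 2) (2 * g ζ * (2 * a * E ζ ^ 2)) ζ := by
    have := (hgd ζ).pow 2
    refine this.congr_deriv ?_
    ring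
  have hgsq : (g ζ) ^ 2 ≠ 0 := pow_ne_zero _ hgζ
  have hu1d := hNd.div hDd hgsq
  have hderu1 : deriv u1 ζ = _ := hu1d.deriv
  rw [h2eq, hderu1, (hder ζ hgζ).deriv]
  have hu0ζ : u0 ζ = 2 * a ^ 2 * E ζ / g ζ := by rw [hu0g]
  rw [hu1, hu0ζ]
  have hE0 : E ζ ≠ 0 := hEne ζ
  clear_value u1 g E
  simp only
  have key : (2 * a ^ 3 * E ζ * (-E ζ ^ 2 - a ^ 2 * p3) / g ζ ^ 2) ^ 2 / (2 * a ^ 2 * E ζ / g ζ)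
      = 2 * a ^ 4 * E ζ * (-E ζ ^ 2 - a ^ 2 * p3) ^ 2 / g ζ ^ 3 := by
    rw [div_div_eq_mul_div]
    field_simp [hE0, hgζ, ha]
  rw [key]
  rw [hgdef] at hgζ ⊢
  simp only at hgζ ⊢
  field_simp
  ring
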